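/- Let d ∈ ℕ, let ‖·‖ be a norm on ℝ^d, let 𝒪 ⊆ ℝ^d be non-empty, let η : 𝒪 → ℝ be upper semi-continuous, let φ : 𝒪 → [0,∞) be lower semi-continuous, assume inf_{α > 0} [sup_{y ∈ 𝒪} (η(y) − α·φ(y))] ∈ ℝ, and let x : (0,∞) → 𝒪 be a family of approximate maximizers, i.e., limsup_{α → ∞} [sup_{y ∈ 𝒪}(η(y) − α·φ(y)) − (η(x_α) − α·φ(x_α))] = 0. Then limsup_{α → ∞} [α·φ(x_α)] = 0. -/
import Mathlib


open Set Filter Topology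

noncomputable section

/-- Let `O ⊆ ℝ^d` be non-empty, `η : O → ℝ` upper semicontinuous,
`φ : O → [0,∞)` lower semicontinuous, assume that for every `α > 0` the supremum
`S α = sup_{y ∈ O} (η y − α φ y)` exists (as a real number) and that `inf_{α>0} S α ∈ ℝ`
(i.e. `S` is bounded below on `(0,∞)`), and let `x_α ∈ O` (α > 0) be approximate
maximizers, i.e. `S α − (η x_α − α φ x_α) → 0` as `α → ∞`. Then `α · φ(x_α) → 0` as
`α → ∞`. -/
theorem penalization_term_tendsto_zero
    (d : ℕ) (hd : 0 < d)
    (O : Set (EuclideanSpace ℝ (Fin d))) (hOne : O.Nonempty)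
    (η : EuclideanSpace ℝ (Fin d) → ℝ)
    (hη : UpperSemicontinuousOn η O)
    (φ : EuclideanSpace ℝ (Fin d) → ℝ)
    (hφnonneg : ∀ y ∈ O, 0 ≤ φ y)
    (hφ : LowerSemicontinuousOn φ O)
    (S : ℝ → ℝ)
    (hS : ∀ α ∈ Ioi (0:ℝ), IsLUB ((fun y => η y - α * φ y) '' O) (S α))
    (hSbdd : ∃ M : ℝ, ∀ α ∈ Ioi (0:ℝ), M ≤ S α)
    (x : ℝ → EuclideanSpace ℝ (Fin d))
    (hxO : ∀ α ∈ Ioi (0:ℝ), x α ∈ O)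
    (hx : Tendsto (fun α => S α - (η (x α) - α * φ (x α))) atTop (𝓝 0)) :
    Tendsto (fun α => α * φ (x α)) atTop (𝓝 0) := by
  obtain ⟨M, hM⟩ := hSbdd
  -- S is antitone on (0, ∞)
  have hanti : ∀ a ∈ Ioi (0:ℝ), ∀ b ∈ Ioi (0:ℝ), a ≤ b → S b ≤ S a := by
    intro a ha b hb hab
    refine (hS b hb).2 ?_
    rintro _ ⟨y, hy, rfl⟩
    have h1 : η y - b * φ y ≤ η y - a * φ y := by
      have := mul_le_mul_of_nonneg_right hab (hφnonneg y hy)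
      linarith
    exact h1.trans ((hS a ha).1 ⟨y, hy, rfl⟩)
  -- T α = S (max α 1) is antitone and bounded below
  set T : ℝ → ℝ := fun α => S (max α 1) with hT
  have hmaxpos : ∀ α : ℝ, max α 1 ∈ Ioi (0:ℝ) := fun α =>
    lt_of_lt_of_le zero_lt_one (le_max_right α 1)
  have hTanti : Antitone T := fun a b hab =>
    hanti _ (hmaxpos a) _ (hmaxpos b) (max_le_max hab le_rfl)
  have hTbdd : BddBelow (Set.range T) := by
    refine ⟨M, ?_⟩
    rintro _ ⟨α, rfl⟩
    exact hM _ (hmaxpos α)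
  have hTlim : Tendsto T atTop (𝓝 (⨅ α, T α)) := tendsto_atTop_ciInf hTanti hTbdd
  have hTlim2 : Tendsto (fun α => T (α / 2)) atTop (𝓝 (⨅ α, T α)) :=
    hTlim.comp (tendsto_id.atTop_div_const two_pos)
  -- upper bound function
  have hup : Tendsto (fun α => 2 * (T (α / 2) - T α + (S α - (η (x α) - α * φ (x α)))))
      atTop (𝓝 0) := by
    have := ((hTlim2.sub hTlim).add hx).const_mul (2:ℝ)
    simpa using this
  refine tendsto_of_tendsto_of_tendsto_of_le_of_le' tendsto_const_nhds hup ?_ ?_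
  · filter_upwards [eventually_gt_atTop (0:ℝ)] with α hα
    exact mul_nonneg hα.le (hφnonneg _ (hxO α hα))
  · filter_upwards [eventually_ge_atTop (2:ℝ)] with α hα
    have hα0 : (0:ℝ) < α := lt_of_lt_of_le two_pos hα
    have hhalf : (1:ℝ) ≤ α / 2 := by linarith
    have hTα : T α = S α := by
      rw [hT]; simp [max_eq_left (le_trans one_le_two hα)]
    have hTh : T (α / 2) = S (α / 2) := by
      rw [hT]; simp [max_eq_left hhalf]
    have hxmem : x α ∈ O := hxO α hα0
    have hkey : η (x α) - (α / 2) * φ (x α) ≤ S (α / 2) :=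
      (hS (α / 2) (lt_of_lt_of_le zero_lt_one hhalf)).1 ⟨x α, hxmem, rfl⟩
    rw [hTα, hTh]
    linarith
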